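/- Let s, t : ℕ → Bool be periodic sequences, i.e. there exists k > 0 with s(i+k) = s(i) for all i, and similarly for t. Then Σ_{i≥0} s(i)·2^{-(i+1)} < Σ_{i≥0} t(i)·2^{-(i+1)} (where true counts as the real number 1 and false as 0) if and only if s is strictly smaller than t in the lexicographic order, i.e. there exists N such that s(i) = t(i) for all i < N, s(N) = false and t(N) = true. -/

import Mathlib

noncomputable def bval (s : ℕ → Bool) : ℝ :=
  ∑' i : ℕ, (if s i then (1 : ℝ) else 0) * (2 : ℝ)⁻¹ ^ (i + 1)

lemma bterm_nonneg (s : ℕ → Bool) (i : ℕ) :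
    0 ≤ (if s i then (1 : ℝ) else 0) * (2 : ℝ)⁻¹ ^ (i + 1) := by
  positivity

lemma bterm_le (s : ℕ → Bool) (i : ℕ) :
    (if s i then (1 : ℝ) else 0) * (2 : ℝ)⁻¹ ^ (i + 1) ≤ (2 : ℝ)⁻¹ ^ (i + 1) := by
  split <;> simp

lemma geom_summable : Summable (fun i : ℕ => (2 : ℝ)⁻¹ ^ (i + 1)) := by
  have : Summable (fun i : ℕ => (2 : ℝ)⁻¹ ^ i) :=
    summable_geometric_of_lt_one (by norm_num) (by norm_num)
  exact (summable_nat_add_iff 1).mpr this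

lemma bsummable (s : ℕ → Bool) :
    Summable (fun i : ℕ => (if s i then (1 : ℝ) else 0) * (2 : ℝ)⁻¹ ^ (i + 1)) :=
  Summable.of_nonneg_of_le (bterm_nonneg s) (bterm_le s) geom_summable

lemma key (s t : ℕ → Bool) (k : ℕ) (hk : 0 < k) (hsk : ∀ i, s (i + k) = s i)
    (N : ℕ) (hpre : ∀ i < N, s i = t i) (hsN : s N = false) (htN : t N = true) :
    bval s < bval t := by
  set a : ℕ → ℝ := fun i => (if s i then (1 : ℝ) else 0) * (2 : ℝ)⁻¹ ^ (i + 1) with ha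
  set b : ℕ → ℝ := fun i => (if t i then (1 : ℝ) else 0) * (2 : ℝ)⁻¹ ^ (i + 1) with hb
  have hsa : Summable a := bsummable s
  have hsb : Summable b := bsummable t
  have hsplit_a : bval s = (∑ i ∈ Finset.range (N + 1), a i) + ∑' i, a (i + (N + 1)) :=
    (hsa.sum_add_tsum_nat_add (N + 1)).symm
  have hsplit_b : bval t = (∑ i ∈ Finset.range (N + 1), b i) + ∑' i, b (i + (N + 1)) :=
    (hsb.sum_add_tsum_nat_add (N + 1)).symm
  -- tail of geometric
  have hg : Summable (fun i : ℕ => (2 : ℝ)⁻¹ ^ (i + (N + 1) + 1)) := by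
    exact (summable_nat_add_iff (f := fun i : ℕ => (2 : ℝ)⁻¹ ^ (i + 1)) (N + 1)).mpr
      geom_summable
  have hgsum : (∑' i : ℕ, (2 : ℝ)⁻¹ ^ (i + (N + 1) + 1)) = (2 : ℝ)⁻¹ ^ (N + 1) := by
    have h1 : ∀ i : ℕ, (2 : ℝ)⁻¹ ^ (i + (N + 1) + 1) = (2 : ℝ)⁻¹ ^ (N + 2) * (2 : ℝ)⁻¹ ^ i := by
      intro i; rw [← pow_add]; ring_nf
    rw [tsum_congr h1, tsum_mul_left, tsum_geometric_of_lt_one (by norm_num) (by norm_num)]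
    rw [show (1 - (2:ℝ)⁻¹)⁻¹ = 2 by norm_num]
    rw [pow_succ]
    ring
  -- strict bound on tail of a
  have htail : (∑' i, a (i + (N + 1))) < (2 : ℝ)⁻¹ ^ (N + 1) := by
    rw [← hgsum]
    refine Summable.tsum_lt_tsum (i := k - 1) (fun i => bterm_le s _) ?_ ((summable_nat_add_iff (N+1)).mpr hsa) hg
    have hkN : k - 1 + (N + 1) = N + k := by omega
    have hfalse : s (k - 1 + (N + 1)) = false := by rw [hkN, hsk]; exact hsN
    simp only [ha, hfalse]
    norm_num
  -- prefix comparison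
  have hprefix : (∑ i ∈ Finset.range (N + 1), a i) + (2 : ℝ)⁻¹ ^ (N + 1)
      ≤ ∑ i ∈ Finset.range (N + 1), b i := by
    rw [Finset.sum_range_succ, Finset.sum_range_succ]
    have h1 : ∀ i ∈ Finset.range N, a i = b i := by
      intro i hi
      simp only [ha, hb, hpre i (Finset.mem_range.mp hi)]
    rw [Finset.sum_congr rfl h1]
    simp [ha, hb, hsN, htN]
  have htailb : 0 ≤ ∑' i, b (i + (N + 1)) :=
    tsum_nonneg fun i => bterm_nonneg t _
  rw [hsplit_a, hsplit_b]
  linarith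

theorem binary_value_lt_iff_lex_lt (s t : ℕ → Bool)
    (hs : ∃ k > 0, ∀ i, s (i + k) = s i)
    (ht : ∃ k > 0, ∀ i, t (i + k) = t i) :
    (∑' i : ℕ, (if s i then (1 : ℝ) else 0) * (2 : ℝ)⁻¹ ^ (i + 1)) <
      (∑' i : ℕ, (if t i then (1 : ℝ) else 0) * (2 : ℝ)⁻¹ ^ (i + 1)) ↔
    ∃ N : ℕ, (∀ i < N, s i = t i) ∧ s N = false ∧ t N = true := by
  obtain ⟨k, hk, hsk⟩ := hs
  obtain ⟨l, hl, htl⟩ := ht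
  constructor
  · intro hlt
    by_contra hno
    push_neg at hno
    rcases Classical.em (∀ i, s i = t i) with heq | hne
    · have : bval s = bval t := by
        unfold bval; exact tsum_congr fun i => by rw [heq i]
      exact absurd hlt (by rw [show (∑' i : ℕ, (if s i then (1:ℝ) else 0) * (2:ℝ)⁻¹ ^ (i+1)) = bval s from rfl, show (∑' i : ℕ, (if t i then (1:ℝ) else 0) * (2:ℝ)⁻¹ ^ (i+1)) = bval t from rfl, this]; exact lt_irrefl _)
    · push_neg at hne
      have hex : ∃ N, s N ≠ t N := hne
      set N := Nat.find hex with hN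
      have hdiff : s N ≠ t N := Nat.find_spec hex
      have hpre : ∀ i < N, s i = t i := fun i hi => by
        by_contra h
        have h2 := Nat.find_min' hex h
        omega
      rcases Bool.eq_false_or_eq_true (s N) with hsN | hsN
      · -- s N = true, so t N = false
        have htN : t N = false := by
          cases htN : t N
          · rfl
          · exact absurd (hsN.trans htN.symm) hdiff
        have := key t s l hl htl N (fun i hi => (hpre i hi).symm) htN hsN
        exact absurd hlt (not_lt.mpr (le_of_lt this))
      · -- s N = false, so t N = true
        have htN : t N = true := by
          cases htN : t N
          · exact absurd (hsN.trans htN.symm) hdiff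
          · rfl
        have := hno N hpre hsN
        simp [htN] at this
  · rintro ⟨N, hpre, hsN, htN⟩
    exact key s t k hk hsk N hpre hsN htN
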